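/- Let n ≥ 1, let φ : ℝⁿ → ℝ be twice continuously differentiable with L-Lipschitz gradient and L_H-Lipschitz Hessian. Let x, s ∈ ℝⁿ with x⁺ = x + s, g ∈ ℝⁿ, H : ℝⁿ → ℝⁿ symmetric linear, σ > 0, μ > 0, κ_g, κ_H ≥ 0, θ ∈ (0,1), ε_f' > 0, and let f(x), f(x⁺) ∈ ℝ with e = |f(x) − φ(x)|, e⁺ = |f(x⁺) − φ(x⁺)|. Suppose: (a) the accuracy conditions ‖∇φ(x) − g‖ ≤ κ_g·max{μ/σ, ‖s‖²} and ‖(∇²φ(x) − H)s‖ ≤ κ_H·max{μ/σ, ‖s‖²} hold; (b) e + e⁺ ≤ 2ε_f'; (c) s satisfies the step conditions ⟨g, s⟩ + ⟨s, H s⟩ + σ‖s‖³ = 0 and ⟨s, H s⟩ + σ‖s‖³ ≥ 0; (d) σ ≥ σ̄ := (2κ_g + κ_H + L + L_H)/(1 − θ/3); and (e) ‖s‖² ≥ μ/σ. Then the iteration is successful: f(x) − f(x⁺) + 2ε_f' ≥ θ·(m(x) − m(x+s)). -/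

import Mathlib

open RealInnerProductSpace

theorem sarc_taylor_aux (n : ℕ)
    (φ : EuclideanSpace ℝ (Fin n) → ℝ) (hφ : ContDiff ℝ 2 φ)
    (Hess : EuclideanSpace ℝ (Fin n) →
      EuclideanSpace ℝ (Fin n) →L[ℝ] EuclideanSpace ℝ (Fin n))
    (hHess : ∀ y, HasFDerivAt (gradient φ) (Hess y) y)
    (L_H : ℝ)
    (hLH : ∀ y z, ‖Hess y - Hess z‖ ≤ L_H * ‖y - z‖)
    (x s : EuclideanSpace ℝ (Fin n)) :
    φ (x + s) ≤ φ x + ⟪gradient φ x, s⟫ + ⟪Hess x s, s⟫ / 2 + L_H * ‖s‖ ^ 3 / 6 := by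
  have hdiff : Differentiable ℝ φ := hφ.differentiable (by norm_num)
  set c : ℝ → EuclideanSpace ℝ (Fin n) := fun t => x + t • s with hcdef
  have hc : ∀ t : ℝ, HasDerivAt c s t := by
    intro t
    have h := ((hasDerivAt_id t).smul_const s).const_add x
    rw [one_smul] at h
    exact h
  have hG : ∀ t : ℝ, HasDerivAt (fun t => ⟪gradient φ (c t), s⟫) ⟪Hess (c t) s, s⟫ t := by
    intro t
    have h1 : HasDerivAt (fun t => gradient φ (c t)) (Hess (c t) s) t := by
      exact (hHess (c t)).comp_hasDerivAt t (hc t)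
    simpa using h1.inner ℝ (hasDerivAt_const t s)
  have hψ : ∀ t : ℝ, HasDerivAt (fun t => φ (c t)) ⟪gradient φ (c t), s⟫ t := by
    intro t
    have h1 := ((hdiff (c t)).hasGradientAt).hasFDerivAt.comp_hasDerivAt t (hc t)
    rw [InnerProductSpace.toDual_apply_apply] at h1
    exact h1
  set B : ℝ → ℝ := fun t => ⟪gradient φ (c t), s⟫ - ⟪gradient φ x, s⟫
      - t * ⟪Hess x s, s⟫ - L_H * ‖s‖ ^ 3 * t ^ 2 / 2 with hBdef
  have hB : ∀ t : ℝ, HasDerivAt B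
      (⟪Hess (c t) s, s⟫ - ⟪Hess x s, s⟫ - L_H * ‖s‖ ^ 3 * t) t := by
    intro t
    have h1 := (((hG t).sub_const ⟪gradient φ x, s⟫).sub
        ((hasDerivAt_id t).const_mul ⟪Hess x s, s⟫)).sub
        (((hasDerivAt_pow 2 t).const_mul (L_H * ‖s‖ ^ 3)).div_const 2)
    refine (h1.congr_deriv ?_).congr_of_eventuallyEq (Filter.EventuallyEq.of_eq ?_)
    rotate_left
    · funext u
      simp only [hBdef, id_eq, Pi.sub_apply]
      ring
    · norm_num
      ring
  have hBd : ∀ t ∈ Set.Ioo (0:ℝ) 1, deriv B t ≤ 0 := by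
    intro t ht
    rw [(hB t).deriv]
    have h1 : ⟪Hess (c t) s - Hess x s, s⟫ ≤ L_H * ‖s‖ ^ 3 * t := by
      calc ⟪Hess (c t) s - Hess x s, s⟫ ≤ ‖Hess (c t) s - Hess x s‖ * ‖s‖ :=
            real_inner_le_norm _ _
        _ ≤ (‖Hess (c t) - Hess x‖ * ‖s‖) * ‖s‖ := by
            gcongr
            exact (Hess (c t) - Hess x).le_opNorm s
        _ ≤ ((L_H * ‖c t - x‖) * ‖s‖) * ‖s‖ := by
            have := hLH (c t) x
            gcongr
        _ = L_H * ‖s‖ ^ 3 * t := by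
            have : c t - x = t • s := by simp [hcdef]
            rw [this, norm_smul, Real.norm_eq_abs, abs_of_pos ht.1]
            ring
    rw [inner_sub_left] at h1
    linarith
  have hBcont : ∀ t : ℝ, ContinuousAt B t := fun t => (hB t).differentiableAt.continuousAt
  have hBanti : AntitoneOn B (Set.Icc 0 1) := by
    apply antitoneOn_of_deriv_nonpos (convex_Icc 0 1)
    · exact fun t _ => (hBcont t).continuousWithinAt
    · rw [interior_Icc]
      exact fun t _ => (hB t).differentiableAt.differentiableWithinAt
    · rw [interior_Icc]; exact hBd
  have hB1 : B 1 ≤ 0 := by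
    have h0 : B 0 = 0 := by simp [hBdef, hcdef]
    have := hBanti (Set.left_mem_Icc.2 zero_le_one) (Set.right_mem_Icc.2 zero_le_one) zero_le_one
    linarith
  -- the function A
  set A : ℝ → ℝ := fun t => φ (c t) - φ x - t * ⟪gradient φ x, s⟫
      - t ^ 2 / 2 * ⟪Hess x s, s⟫ - L_H * ‖s‖ ^ 3 * t ^ 3 / 6 with hAdef
  have hA : ∀ t : ℝ, HasDerivAt A (B t) t := by
    intro t
    have h1 := ((((hψ t).sub_const (φ x)).sub
        ((hasDerivAt_id t).const_mul ⟪gradient φ x, s⟫)).sub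
        (((hasDerivAt_pow 2 t).div_const 2).mul_const ⟪Hess x s, s⟫)).sub
        (((hasDerivAt_pow 3 t).const_mul (L_H * ‖s‖ ^ 3)).div_const 6)
    refine (h1.congr_deriv ?_).congr_of_eventuallyEq (Filter.EventuallyEq.of_eq ?_)
    rotate_left
    · funext u
      simp only [hAdef, id_eq, Pi.sub_apply]
      ring
    · simp only [hBdef]
      norm_num
      ring
  have hAd : ∀ t ∈ Set.Ioo (0:ℝ) 1, deriv A t ≤ 0 := by
    intro t ht
    rw [(hA t).deriv]
    have h2 : B t ≤ B 0 := hBanti (Set.left_mem_Icc.2 zero_le_one)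
      (Set.mem_Icc.2 ⟨le_of_lt ht.1, le_of_lt ht.2⟩) (le_of_lt ht.1)
    have h0 : B 0 = 0 := by simp [hBdef, hcdef]
    linarith
  have hAanti : AntitoneOn A (Set.Icc 0 1) := by
    apply antitoneOn_of_deriv_nonpos (convex_Icc 0 1)
    · exact fun t _ => ((hA t).differentiableAt.continuousAt).continuousWithinAt
    · rw [interior_Icc]
      exact fun t _ => (hA t).differentiableAt.differentiableWithinAt
    · rw [interior_Icc]; exact hAd
  have hA1 : A 1 ≤ 0 := by
    have h0 : A 0 = 0 := by simp [hAdef, hcdef]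
    have := hAanti (Set.left_mem_Icc.2 zero_le_one) (Set.right_mem_Icc.2 zero_le_one) zero_le_one
    linarith
  have hc1 : c 1 = x + s := by simp [hcdef]
  rw [hAdef] at hA1
  simp only [hc1] at hA1
  nlinarith [hA1]

/-- Large `σ` guarantees success (unless the step is very small): on a true
iteration with `σ ≥ σ̄ = (2κ_g + κ_H + L + L_H)/(1 − θ/3)` and `‖s‖² ≥ μ/σ`,
the acceptance test `f(x) − f(x⁺) + 2ε_f' ≥ θ·(m(x) − m(x+s))` holds. -/
theorem sarc_large_sigma_successful (n : ℕ) (hn : 1 ≤ n)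
    (φ : EuclideanSpace ℝ (Fin n) → ℝ) (hφ : ContDiff ℝ 2 φ)
    (Hess : EuclideanSpace ℝ (Fin n) →
      EuclideanSpace ℝ (Fin n) →L[ℝ] EuclideanSpace ℝ (Fin n))
    (hHess : ∀ y, HasFDerivAt (gradient φ) (Hess y) y)
    (L L_H : ℝ)
    (hL : ∀ y z, ‖gradient φ y - gradient φ z‖ ≤ L * ‖y - z‖)
    (hLH : ∀ y z, ‖Hess y - Hess z‖ ≤ L_H * ‖y - z‖)
    (x s g : EuclideanSpace ℝ (Fin n))
    (H : EuclideanSpace ℝ (Fin n) →L[ℝ] EuclideanSpace ℝ (Fin n))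
    (hHsym : ∀ u v : EuclideanSpace ℝ (Fin n), ⟪H u, v⟫ = ⟪u, H v⟫)
    (σ μ κg κH θ εf' fx fxp : ℝ)
    (hσ : 0 < σ) (hμ : 0 < μ) (hκg : 0 ≤ κg) (hκH : 0 ≤ κH)
    (hθ : θ ∈ Set.Ioo (0 : ℝ) 1) (hεf' : 0 < εf')
    (hacc_g : ‖gradient φ x - g‖ ≤ κg * max (μ / σ) (‖s‖ ^ 2))
    (hacc_H : ‖(Hess x - H) s‖ ≤ κH * max (μ / σ) (‖s‖ ^ 2))
    (herr : |fx - φ x| + |fxp - φ (x + s)| ≤ 2 * εf')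
    (hstep1 : ⟪g, s⟫ + ⟪s, H s⟫ + σ * ‖s‖ ^ 3 = 0)
    (hstep2 : ⟪s, H s⟫ + σ * ‖s‖ ^ 3 ≥ 0)
    (hσbig : σ ≥ (2 * κg + κH + L + L_H) / (1 - θ / 3))
    (hsbig : ‖s‖ ^ 2 ≥ μ / σ) :
    fx - fxp + 2 * εf' ≥
      θ * (-(⟪g, s⟫ + (1 / 2) * ⟪s, H s⟫ + (σ / 3) * ‖s‖ ^ 3)) := by
  obtain ⟨hθ0, hθ1⟩ := hθ
  have hTaylor : φ (x + s) ≤ φ x + ⟪gradient φ x, s⟫ + ⟪Hess x s, s⟫ / 2 + L_H * ‖s‖ ^ 3 / 6 :=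
    sarc_taylor_aux n φ hφ Hess hHess L_H hLH x s
  set v := EuclideanSpace.single (⟨0, hn⟩ : Fin n) (1:ℝ) with hvdef
  have hv : ‖v‖ = 1 := by simp [hvdef, EuclideanSpace.norm_single]
  have hLnn : 0 ≤ L := by
    have h := hL v 0
    rw [sub_zero, hv, mul_one] at h
    exact le_trans (norm_nonneg _) h
  have hLHnn : 0 ≤ L_H := by
    have h := hLH v 0
    rw [sub_zero, hv, mul_one] at h
    exact le_trans (norm_nonneg _) h
  have hmax : max (μ / σ) (‖s‖ ^ 2) = ‖s‖ ^ 2 := max_eq_right hsbig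
  rw [hmax] at hacc_g hacc_H
  have hsn : (0:ℝ) ≤ ‖s‖ := norm_nonneg s
  have hb : (0:ℝ) ≤ ‖s‖ ^ 3 := by positivity
  have hg1 : ⟪gradient φ x, s⟫ ≤ ⟪g, s⟫ + κg * ‖s‖ ^ 3 := by
    have h1 : ⟪gradient φ x - g, s⟫ ≤ ‖gradient φ x - g‖ * ‖s‖ := real_inner_le_norm _ _
    have h2 : ‖gradient φ x - g‖ * ‖s‖ ≤ (κg * ‖s‖ ^ 2) * ‖s‖ := by gcongr
    rw [inner_sub_left] at h1
    nlinarith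
  have hH1 : ⟪Hess x s, s⟫ ≤ ⟪s, H s⟫ + κH * ‖s‖ ^ 3 := by
    have h1 : ⟪(Hess x - H) s, s⟫ ≤ ‖(Hess x - H) s‖ * ‖s‖ := real_inner_le_norm _ _
    have h2 : ‖(Hess x - H) s‖ * ‖s‖ ≤ (κH * ‖s‖ ^ 2) * ‖s‖ := by gcongr
    have h3 : ⟪(Hess x - H) s, s⟫ = ⟪Hess x s, s⟫ - ⟪s, H s⟫ := by
      rw [ContinuousLinearMap.sub_apply, inner_sub_left, real_inner_comm (H s) s]
    nlinarith
  have herr1 : φ x - fx ≤ |fx - φ x| := by rw [abs_sub_comm]; exact le_abs_self _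
  have herr2 : fxp - φ (x + s) ≤ |fxp - φ (x + s)| := le_abs_self _
  have hθ3 : (0:ℝ) < 1 - θ / 3 := by linarith
  have hσ1 : 2 * κg + κH + L + L_H ≤ σ * (1 - θ / 3) := by
    rw [ge_iff_le, div_le_iff₀ hθ3] at hσbig
    linarith
  have h4 : 0 ≤ (1 - θ) * (⟪s, H s⟫ + σ * ‖s‖ ^ 3) :=
    mul_nonneg (by linarith) hstep2
  have h5 : (2 * κg + κH + L + L_H) * ‖s‖ ^ 3 ≤ (σ * (1 - θ / 3)) * ‖s‖ ^ 3 :=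
    mul_le_mul_of_nonneg_right hσ1 hb
  have h6 : 0 ≤ L * ‖s‖ ^ 3 := mul_nonneg hLnn hb
  have h7 : 0 ≤ L_H * ‖s‖ ^ 3 := mul_nonneg hLHnn hb
  have h8 : θ * (⟪g, s⟫ + ⟪s, H s⟫ + σ * ‖s‖ ^ 3) = 0 := by rw [hstep1]; ring
  linarith [hTaylor, hg1, hH1, herr, herr1, herr2, h4, h5, h6, h7, h8, hstep1, hb,
    abs_nonneg (fx - φ x), abs_nonneg (fxp - φ (x + s))]
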